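/- Let Θ̂ be a symmetric positive definite matrix that minimizes Φ(·, λ) over the set of symmetric positive definite p×p matrices. Then for all indices i, j: if Θ̂_{ij} ≠ 0 then (Θ̂⁻¹)_{ij} − S_{ij} = λ·sign(Θ̂_{ij}), and if Θ̂_{ij} = 0 then |(Θ̂⁻¹)_{ij} − S_{ij}| ≤ λ. -/

import Mathlib

open Matrix
open Polynomial


lemma scalar_subgrad (μ d a δ : ℝ) (hμ : 0 < μ) (g : ℝ → ℝ)
    (hg : HasDerivAt g d 0) (hg0 : g 0 = 0) (hδ : 0 < δ)
    (h : ∀ t : ℝ, |t| < δ → 0 ≤ g t + μ * (|a + t| - |a|)) :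
    (a ≠ 0 → d + μ * Real.sign a = 0) ∧ (a = 0 → |d| ≤ μ) := by
  constructor
  · intro ha
    set s := Real.sign a with hs
    have habs : ∀ t : ℝ, |t| < |a| → |a + t| = |a| + s * t := by
      intro t ht
      obtain ⟨ht1, ht2⟩ := abs_lt.mp ht
      rcases lt_or_gt_of_ne ha with hneg | hpos
      · have h4 : a + t < 0 := by rw [abs_of_neg hneg] at ht2; linarith
        rw [abs_of_neg h4, abs_of_neg hneg, hs, Real.sign_of_neg hneg]; ring
      · have h4 : 0 < a + t := by rw [abs_of_pos hpos] at ht1; linarith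
        rw [abs_of_pos h4, abs_of_pos hpos, hs, Real.sign_of_pos hpos]; ring
    have hloc : IsLocalMin (fun t => g t + μ * s * t) 0 := by
      have hmem : Metric.ball (0:ℝ) (min δ |a|) ∈ nhds (0:ℝ) :=
        Metric.ball_mem_nhds _ (lt_min hδ (abs_pos.mpr ha))
      refine Filter.eventually_of_mem hmem (fun t ht => ?_)
      simp only [Metric.mem_ball, Real.dist_eq, sub_zero] at ht
      have h1 := h t (ht.trans_le (min_le_left _ _))
      have h2 := habs t (ht.trans_le (min_le_right _ _))
      simp only [hg0]
      nlinarith [h1, h2]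
    have hd : HasDerivAt (fun t => g t + μ * s * t) (d + μ * s) 0 := by
      exact (hg.add ((hasDerivAt_id (0:ℝ)).const_mul (μ * s))).congr_deriv (by simp)
    have := hloc.hasDerivAt_eq_zero hd
    linarith [this]
  · intro ha
    subst ha
    have hslope : Filter.Tendsto (slope g 0) (nhdsWithin 0 {(0:ℝ)}ᶜ) (nhds d) :=
      hasDerivAt_iff_tendsto_slope.mp hg
    have hpos : -μ ≤ d := by
      have h1 : Filter.Tendsto (slope g 0) (nhdsWithin 0 (Set.Ioi 0)) (nhds d) :=
        hslope.mono_left (nhdsWithin_mono _ (fun x hx => by simp at hx ⊢; exact ne_of_gt hx))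
      refine ge_of_tendsto h1 ?_
      filter_upwards [Ioo_mem_nhdsGT hδ] with t ht
      obtain ⟨ht0, htδ⟩ := ht
      have h1 := h t (by rw [abs_of_pos ht0]; exact htδ)
      rw [slope_def_field, hg0, sub_zero, sub_zero, le_div_iff₀ ht0]
      rw [zero_add, abs_of_pos ht0, abs_zero] at h1
      nlinarith [h1]
    have hneg : d ≤ μ := by
      have h1 : Filter.Tendsto (slope g 0) (nhdsWithin 0 (Set.Iio 0)) (nhds d) :=
        hslope.mono_left (nhdsWithin_mono _ (fun x hx => by simp at hx ⊢; exact ne_of_lt hx))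
      refine le_of_tendsto h1 ?_
      filter_upwards [Ioo_mem_nhdsLT (neg_lt_zero.mpr hδ)] with t ht
      obtain ⟨htδ, ht0⟩ := ht
      have h1 := h t (by rw [abs_of_neg ht0]; linarith)
      rw [slope_def_field, hg0, sub_zero, sub_zero, div_le_iff_of_neg ht0]
      rw [zero_add, abs_of_neg ht0, abs_zero] at h1
      nlinarith [h1]
    exact abs_le.mpr ⟨hpos, hneg⟩

lemma dot_expand {p : ℕ} (A : Matrix (Fin p) (Fin p) ℝ) (x : Fin p → ℝ) :
    x ⬝ᵥ A *ᵥ x = ∑ i, ∑ j, x i * A i j * x j := by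
  simp only [dotProduct, mulVec, Finset.mul_sum, mul_assoc]

lemma dot_self_pos {p : ℕ} {x : Fin p → ℝ} (hx : x ≠ 0) : 0 < x ⬝ᵥ x := by
  have h1 : 0 ≤ x ⬝ᵥ x := Finset.sum_nonneg (fun i _ => mul_self_nonneg _)
  rcases h1.lt_or_eq with h | h
  · exact h
  · exact absurd (dotProduct_self_eq_zero.mp h.symm) hx

lemma quad_abs_le {p : ℕ} (A : Matrix (Fin p) (Fin p) ℝ) (x : Fin p → ℝ) :
    |x ⬝ᵥ A *ᵥ x| ≤ (∑ i, ∑ j, |A i j|) * (x ⬝ᵥ x) := by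
  have hxx : ∀ k, x k ^ 2 ≤ x ⬝ᵥ x := by
    intro k
    simp only [dotProduct]
    calc x k ^ 2 = x k * x k := by ring
    _ ≤ ∑ i, x i * x i := Finset.single_le_sum (f := fun i => x i * x i)
        (fun i _ => mul_self_nonneg _) (Finset.mem_univ k)
  have key : ∀ i j : Fin p, |x i * A i j * x j| ≤ |A i j| * (x ⬝ᵥ x) := by
    intro i j
    have h1 : |x i * A i j * x j| = |A i j| * (|x i| * |x j|) := by
      rw [abs_mul, abs_mul]; ring
    rw [h1]
    refine mul_le_mul_of_nonneg_left ?_ (abs_nonneg _)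
    nlinarith [hxx i, hxx j, sq_nonneg (|x i| - |x j|), sq_abs (x i), sq_abs (x j),
      abs_nonneg (x i), abs_nonneg (x j)]
  rw [dot_expand]
  calc |∑ i, ∑ j, x i * A i j * x j| ≤ ∑ i, |∑ j, x i * A i j * x j| :=
        Finset.abs_sum_le_sum_abs _ _
    _ ≤ ∑ i, ∑ j, |x i * A i j * x j| :=
        Finset.sum_le_sum (fun i _ => Finset.abs_sum_le_sum_abs _ _)
    _ ≤ ∑ i, ∑ j, |A i j| * (x ⬝ᵥ x) :=
        Finset.sum_le_sum (fun i _ => Finset.sum_le_sum (fun j _ => key i j))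
    _ = (∑ i, ∑ j, |A i j|) * (x ⬝ᵥ x) := by
        simp only [← Finset.sum_mul]

lemma cs_aux {q r T : ℝ} (hr : 0 < r) (h : ∀ s : ℝ, 0 ≤ T - 2*s*q + s^2*r) :
    q^2 ≤ T * r := by
  have h2 := h (q / r)
  have e1 : (q/r)^2 * r = q^2/r := by field_simp [pow_two]
  have e2 : 2*(q/r)*q = 2*q^2/r := by field_simp
  rw [e1, e2] at h2
  have h3 : q^2/r ≤ T := by
    have : 2*q^2/r - q^2/r = q^2/r := by ring
    linarith [h2, this]
  calc q^2 = (q^2/r) * r := by field_simp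
  _ ≤ T * r := mul_le_mul_of_nonneg_right h3 (le_of_lt hr)

lemma posdef_lower {p : ℕ} {Θ : Matrix (Fin p) (Fin p) ℝ} (hΘ : Θ.PosDef) :
    ∃ ε : ℝ, 0 < ε ∧ ∀ x : Fin p → ℝ, ε * (x ⬝ᵥ x) ≤ x ⬝ᵥ Θ *ᵥ x := by
  have hdet : IsUnit Θ.det := isUnit_iff_ne_zero.mpr (ne_of_gt hΘ.det_pos)
  have hinv : Θ⁻¹.PosDef := hΘ.inv
  obtain ⟨K, hK0, hKb⟩ : ∃ K : ℝ, 0 < K ∧ ∀ x : Fin p → ℝ, x ⬝ᵥ Θ⁻¹ *ᵥ x ≤ K * (x ⬝ᵥ x) := by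
    refine ⟨(∑ i, ∑ j, |Θ⁻¹ i j|) + 1, ?_, fun x => ?_⟩
    · have : (0:ℝ) ≤ ∑ i, ∑ j, |Θ⁻¹ i j| :=
        Finset.sum_nonneg (fun i _ => Finset.sum_nonneg (fun j _ => abs_nonneg _))
      linarith
    · have h1 := quad_abs_le Θ⁻¹ x
      have h2 := le_abs_self (x ⬝ᵥ Θ⁻¹ *ᵥ x)
      have h3 : 0 ≤ x ⬝ᵥ x := Finset.sum_nonneg (fun i _ => mul_self_nonneg _)
      nlinarith
  refine ⟨1 / K, by positivity, fun x => ?_⟩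
  rcases eq_or_ne x 0 with rfl | hx
  · simp
  · have hxx : 0 < x ⬝ᵥ x := dot_self_pos hx
    have hAx : 0 < x ⬝ᵥ Θ⁻¹ *ᵥ x := by simpa using hinv.dotProduct_mulVec_pos hx
    have hΘsymm : Θᵀ = Θ := by rw [← Matrix.conjTranspose_eq_transpose_of_trivial]; exact hΘ.1.eq
    have key : ∀ s : ℝ,
        0 ≤ x ⬝ᵥ Θ *ᵥ x - 2 * s * (x ⬝ᵥ x) + s^2 * (x ⬝ᵥ Θ⁻¹ *ᵥ x) := by
      intro s
      have hΘw : Θ *ᵥ (Θ⁻¹ *ᵥ x) = x := by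
        rw [Matrix.mulVec_mulVec, Matrix.mul_nonsing_inv _ hdet, Matrix.one_mulVec]
      have hwΘx : (Θ⁻¹ *ᵥ x) ⬝ᵥ Θ *ᵥ x = x ⬝ᵥ x := by
        rw [Matrix.dotProduct_mulVec, ← Matrix.mulVec_transpose, hΘsymm, hΘw]
      have hy := hΘ.posSemidef.dotProduct_mulVec_nonneg (x - s • (Θ⁻¹ *ᵥ x))
      rw [star_trivial] at hy
      have hexp : (x - s • (Θ⁻¹ *ᵥ x)) ⬝ᵥ Θ *ᵥ (x - s • (Θ⁻¹ *ᵥ x))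
          = x ⬝ᵥ Θ *ᵥ x - 2 * s * (x ⬝ᵥ x) + s^2 * (x ⬝ᵥ Θ⁻¹ *ᵥ x) := by
        rw [Matrix.mulVec_sub, Matrix.mulVec_smul, hΘw, sub_dotProduct,
          smul_dotProduct, dotProduct_sub, dotProduct_sub,
          dotProduct_smul, dotProduct_smul, hwΘx,
          dotProduct_comm (Θ⁻¹ *ᵥ x) x]
        simp only [smul_eq_mul]; ring
      linarith [hy, hexp.symm.le, hexp.le]
    have hT0 : 0 ≤ x ⬝ᵥ Θ *ᵥ x := by simpa using hΘ.posSemidef.dotProduct_mulVec_nonneg x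
    have hr : (x ⬝ᵥ Θ⁻¹ *ᵥ x) ≠ 0 := ne_of_gt hAx
    have key2 : (x ⬝ᵥ x)^2 ≤ (x ⬝ᵥ Θ *ᵥ x) * (x ⬝ᵥ Θ⁻¹ *ᵥ x) := by
      exact cs_aux hAx key
    have hKx := hKb x
    rw [div_mul_eq_mul_div, div_le_iff₀ hK0]
    nlinarith [key2, hKx, hxx, hAx, hK0, hT0, mul_le_mul_of_nonneg_left hKx hT0]

lemma posdef_perturb {p : ℕ} {Θ H : Matrix (Fin p) (Fin p) ℝ} (hΘ : Θ.PosDef)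
    (hH : H.IsHermitian) {C ε : ℝ} (hC : 0 < C)
    (hHq : ∀ x : Fin p → ℝ, |x ⬝ᵥ H *ᵥ x| ≤ C * (x ⬝ᵥ x))
    (hε : 0 < ε) (hlow : ∀ x : Fin p → ℝ, ε * (x ⬝ᵥ x) ≤ x ⬝ᵥ Θ *ᵥ x)
    {t : ℝ} (ht : |t| < ε / C) : (Θ + t • H).PosDef := by
  refine Matrix.PosDef.of_dotProduct_mulVec_pos ?_ ?_
  · show (Θ + t • H)ᴴ = Θ + t • H
    rw [conjTranspose_add, conjTranspose_smul, hΘ.1.eq, hH.eq, star_trivial]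
  · intro x hx
    rw [star_trivial]
    have hxx : 0 < x ⬝ᵥ x := by
      have h1 : 0 ≤ x ⬝ᵥ x := Finset.sum_nonneg (fun i _ => mul_self_nonneg _)
      rcases h1.lt_or_eq with h | h
      · exact h
      · exact absurd (dotProduct_self_eq_zero.mp h.symm) hx
    have hq : x ⬝ᵥ (Θ + t • H) *ᵥ x = x ⬝ᵥ Θ *ᵥ x + t * (x ⬝ᵥ H *ᵥ x) := by
      rw [Matrix.add_mulVec, dotProduct_add, Matrix.smul_mulVec,
        dotProduct_smul, smul_eq_mul]
    rw [hq]
    have h1 := hlow x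
    have h2 := hHq x
    have h3 : |t * (x ⬝ᵥ H *ᵥ x)| < ε * (x ⬝ᵥ x) := by
      rw [abs_mul]
      calc |t| * |x ⬝ᵥ H *ᵥ x| ≤ |t| * (C * (x ⬝ᵥ x)) :=
            mul_le_mul_of_nonneg_left h2 (abs_nonneg _)
      _ < (ε/C) * (C * (x ⬝ᵥ x)) := mul_lt_mul_of_pos_right ht (by positivity)
      _ = ε * (x ⬝ᵥ x) := by field_simp
    have h5 := neg_abs_le (t * (x ⬝ᵥ H *ᵥ x))
    nlinarith [h1, h3, h5, hxx]

lemma trace_mul_basis {p : ℕ} (A : Matrix (Fin p) (Fin p) ℝ) (i j : Fin p) :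
    (A * Matrix.single i j 1).trace = A j i := by
  simp [Matrix.trace, Matrix.diag, Matrix.mul_apply, Matrix.single, ite_and,
    Finset.sum_ite_eq, Finset.sum_ite_eq']

lemma logdet_deriv {p : ℕ} {Θ H : Matrix (Fin p) (Fin p) ℝ} (hdet : IsUnit Θ.det)
    (hpos : 0 < Θ.det) :
    HasDerivAt (fun t : ℝ => Real.log ((Θ + t • H).det)) (Θ⁻¹ * H).trace 0 := by
  set M := Θ⁻¹ * H with hM
  set P : Polynomial ℝ := ((1 + (X : ℝ[X]) • M.map C).det).divX.divX with hP
  have hfac : ∀ t : ℝ, (Θ + t • H).det = Θ.det * (1 + M.trace * t + P.eval t * t^2) := by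
    intro t
    have h1 : Θ + t • H = Θ * (1 + t • M) := by
      rw [mul_add, mul_one, Matrix.mul_smul, hM, Matrix.mul_nonsing_inv_cancel_left _ _ hdet]
    rw [h1, Matrix.det_mul, Matrix.det_one_add_smul t M]
  have hF : HasDerivAt (fun t : ℝ => 1 + M.trace * t + P.eval t * t^2) M.trace 0 := by
    have h1 : HasDerivAt (fun t : ℝ => 1 + M.trace * t) M.trace 0 := by
      simpa using ((hasDerivAt_id (0:ℝ)).const_mul M.trace).const_add 1
    have h2 : HasDerivAt (fun t : ℝ => P.eval t * t^2) 0 0 := by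
      have := (P.hasDerivAt 0).mul (hasDerivAt_pow 2 (0:ℝ))
      exact this.congr_deriv (by simp)
    exact (h1.add h2).congr_deriv (by simp)
  have hG : HasDerivAt (fun t : ℝ => Θ.det * (1 + M.trace * t + P.eval t * t^2))
      (Θ.det * M.trace) 0 := hF.const_mul _
  have hne : Θ.det * (1 + M.trace * 0 + P.eval 0 * 0^2) ≠ 0 := by
    simpa using ne_of_gt hpos
  have hlog := hG.log hne
  have heq : (fun t : ℝ => Real.log ((Θ + t • H).det))
      = fun t : ℝ => Real.log (Θ.det * (1 + M.trace * t + P.eval t * t^2)) := by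
    funext t; rw [hfac t]
  rw [heq]
  convert hlog using 1
  field_simp
  simp

lemma sum_pair {p : ℕ} {i j : Fin p} (hij : i ≠ j) (h : Fin p → Fin p → ℝ)
    (hz : ∀ k l, ¬(k = i ∧ l = j) → ¬(k = j ∧ l = i) → h k l = 0) :
    ∑ k, ∑ l, h k l = h i j + h j i := by
  rw [← Finset.sum_product', Finset.univ_product_univ]
  rw [← Finset.sum_subset (s₁ := ({(i,j),(j,i)} : Finset (Fin p × Fin p)))
    (Finset.subset_univ _) ?_]
  · rw [Finset.sum_insert (by simp [hij]), Finset.sum_singleton]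
  · intro x _ hx
    simp only [Finset.mem_insert, Finset.mem_singleton, Prod.ext_iff, not_or] at hx
    exact hz x.1 x.2 hx.1 hx.2

lemma sum_diag {p : ℕ} {i : Fin p} (h : Fin p → Fin p → ℝ)
    (hz : ∀ k l, ¬(k = i ∧ l = i) → h k l = 0) :
    ∑ k, ∑ l, h k l = h i i := by
  rw [← Finset.sum_product', Finset.univ_product_univ]
  rw [← Finset.sum_subset (s₁ := ({(i,i)} : Finset (Fin p × Fin p)))
    (Finset.subset_univ _) ?_]
  · rw [Finset.sum_singleton]
  · intro x _ hx
    simp only [Finset.mem_singleton, Prod.ext_iff] at hx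
    exact hz x.1 x.2 hx

/-- The GLASSO objective `Φ(Θ, λ) = −log det Θ + ⟨S, Θ⟩ + λ ‖Θ‖₁`. -/
noncomputable def glassoObj {p : ℕ} (S Θ : Matrix (Fin p) (Fin p) ℝ) (lam : ℝ) : ℝ :=
  -Real.log Θ.det + (∑ i, ∑ j, S i j * Θ i j) + lam * ∑ i, ∑ j, |Θ i j|

lemma glasso_key {p : ℕ} {S Θ : Matrix (Fin p) (Fin p) ℝ} {lam : ℝ}
    (hΘ : Θ.PosDef)
    (hmin : ∀ Θ' : Matrix (Fin p) (Fin p) ℝ, Θ'.PosDef →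
      glassoObj S Θ lam ≤ glassoObj S Θ' lam)
    {H : Matrix (Fin p) (Fin p) ℝ} (hH : H.IsHermitian)
    {C : ℝ} (hC : 0 < C) (hHC : ∀ x : Fin p → ℝ, |x ⬝ᵥ H *ᵥ x| ≤ C * (x ⬝ᵥ x))
    {κ c₂ a : ℝ} (hμ : 0 < κ * lam)
    (habs : ∀ t : ℝ, (∑ k, ∑ l, |(Θ + t • H) k l|) - (∑ k, ∑ l, |Θ k l|)
      = κ * (|a + t| - |a|))
    (hlin : ∀ t : ℝ, (∑ k, ∑ l, S k l * (Θ + t • H) k l) - (∑ k, ∑ l, S k l * Θ k l)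
      = c₂ * t) :
    (a ≠ 0 → (-(Θ⁻¹ * H).trace + c₂) + (κ * lam) * Real.sign a = 0) ∧
    (a = 0 → |(-(Θ⁻¹ * H).trace + c₂)| ≤ κ * lam) := by
  obtain ⟨ε, hε, hlow⟩ := posdef_lower hΘ
  have hdet : IsUnit Θ.det := isUnit_iff_ne_zero.mpr (ne_of_gt hΘ.det_pos)
  set g : ℝ → ℝ := fun t => -Real.log ((Θ + t • H).det) + Real.log Θ.det + c₂ * t with hgdef
  have hg : HasDerivAt g (-(Θ⁻¹ * H).trace + c₂) 0 := by
    have h1 := (logdet_deriv hdet hΘ.det_pos (H := H)).neg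
    have h2 : HasDerivAt (fun t : ℝ => c₂ * t) c₂ 0 := by
      simpa using (hasDerivAt_id (0:ℝ)).const_mul c₂
    exact (h1.add_const (Real.log Θ.det)).add h2
  have hg0 : g 0 = 0 := by simp [hgdef]
  have hper : ∀ t : ℝ, |t| < ε / C → 0 ≤ g t + (κ * lam) * (|a + t| - |a|) := by
    intro t ht
    have hPD := posdef_perturb hΘ hH hC hHC hε hlow ht
    have hm := hmin _ hPD
    unfold glassoObj at hm
    have h1 := habs t
    have h2 := hlin t
    have h3 : lam * (∑ k, ∑ l, |(Θ + t • H) k l|)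
        = lam * (∑ k, ∑ l, |Θ k l|) + (κ * lam) * (|a + t| - |a|) := by
      have e : (∑ k, ∑ l, |(Θ + t • H) k l|)
          = (∑ k, ∑ l, |Θ k l|) + κ * (|a + t| - |a|) := by linarith
      rw [e]; ring
    simp only [hgdef]
    linarith [hm, h2, h3]
  exact scalar_subgrad (κ * lam) _ a (ε / C) hμ g hg hg0 (by positivity) hper

theorem stmt_0 {p : ℕ} (hp : 1 ≤ p) (S : Matrix (Fin p) (Fin p) ℝ) (hS : S.IsSymm)
    (lam : ℝ) (hlam : 0 < lam)
    (Θhat : Matrix (Fin p) (Fin p) ℝ) (hΘ : Θhat.PosDef)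
    (hmin : ∀ Θ : Matrix (Fin p) (Fin p) ℝ, Θ.PosDef →
      glassoObj S Θhat lam ≤ glassoObj S Θ lam) :
    ∀ i j, (Θhat i j ≠ 0 → Θhat⁻¹ i j - S i j = lam * Real.sign (Θhat i j)) ∧
      (Θhat i j = 0 → |Θhat⁻¹ i j - S i j| ≤ lam) := by
  have hdet : IsUnit Θhat.det := isUnit_iff_ne_zero.mpr (ne_of_gt hΘ.det_pos)
  have hsymm : Θhatᵀ = Θhat := by
    rw [← Matrix.conjTranspose_eq_transpose_of_trivial]; exact hΘ.1.eq
  have hsymm' : ∀ k l, Θhat l k = Θhat k l := by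
    intro k l
    conv_lhs => rw [← hsymm]
    rfl
  have hinvsymm : ∀ k l, Θhat⁻¹ l k = Θhat⁻¹ k l := by
    intro k l
    have : (Θhat⁻¹)ᵀ = Θhat⁻¹ := by rw [Matrix.transpose_nonsing_inv, hsymm]
    conv_lhs => rw [← this]
    rfl
  intro i j
  rcases eq_or_ne i j with rfl | hij
  · -- diagonal case
    have hdiag : 0 < Θhat i i := by
      have hx : (Pi.single i 1 : Fin p → ℝ) ≠ 0 := by
        intro h
        have := congrFun h i
        simp at this
      have h1 := hΘ.dotProduct_mulVec_pos hx
      rw [star_trivial, dot_expand] at h1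
      simpa [Pi.single_apply, ite_and, Finset.sum_ite_eq, Finset.sum_ite_eq'] using h1
    set H : Matrix (Fin p) (Fin p) ℝ := Matrix.single i i 1 with hHdef
    clear_value H
    have hHapp : ∀ k l, H k l = (if i = k ∧ i = l then (1:ℝ) else 0) := by
      intro k l; rw [hHdef]; rfl
    have hHii : H i i = 1 := by rw [hHapp, if_pos ⟨rfl, rfl⟩]
    have hHz : ∀ k l, ¬(k = i ∧ l = i) → H k l = 0 := by
      intro k l h1
      rw [hHapp, if_neg (by rintro ⟨e1, e2⟩; exact h1 ⟨e1.symm, e2.symm⟩)]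
    have hT : ∀ a b : Fin p, (Matrix.single a b (1:ℝ))ᵀ = Matrix.single b a 1 := by
      intro a b
      ext k l
      show Matrix.single a b (1:ℝ) l k = _
      simp [Matrix.single, and_comm]
    have hH : H.IsHermitian := by
      show Hᴴ = H
      rw [Matrix.conjTranspose_eq_transpose_of_trivial, hHdef, hT]
    have hHsum : (∑ k, ∑ l, |H k l|) = 1 := by
      rw [sum_diag (i := i) (fun k l => |H k l|) (fun k l h => by simp only [hHz k l h, abs_zero])]
      rw [hHii, abs_one]
    have hHq : ∀ x : Fin p → ℝ, |x ⬝ᵥ H *ᵥ x| ≤ 1 * (x ⬝ᵥ x) := by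
      intro x
      have := quad_abs_le H x
      rwa [hHsum] at this
    have habs : ∀ t : ℝ, (∑ k, ∑ l, |(Θhat + t • H) k l|) - (∑ k, ∑ l, |Θhat k l|)
        = 1 * (|Θhat i i + t| - |Θhat i i|) := by
      intro t
      simp only [← Finset.sum_sub_distrib]
      rw [sum_diag (i := i) (fun k l => |(Θhat + t • H) k l| - |Θhat k l|)
        (fun k l h => by simp [Matrix.add_apply, Matrix.smul_apply, hHz k l h])]
      simp only [Matrix.add_apply, Matrix.smul_apply, smul_eq_mul]
      rw [hHii]
      ring
    have hlin : ∀ t : ℝ, (∑ k, ∑ l, S k l * (Θhat + t • H) k l)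
        - (∑ k, ∑ l, S k l * Θhat k l) = S i i * t := by
      intro t
      simp only [← Finset.sum_sub_distrib]
      rw [sum_diag (i := i) (fun k l => S k l * (Θhat + t • H) k l - S k l * Θhat k l)
        (fun k l h => by simp [Matrix.add_apply, Matrix.smul_apply, hHz k l h])]
      simp only [Matrix.add_apply, Matrix.smul_apply, smul_eq_mul]
      rw [hHii]
      ring
    have key := glasso_key hΘ hmin hH one_pos hHq
      (κ := 1) (c₂ := S i i) (a := Θhat i i) (by linarith) habs hlin
    have htr : (Θhat⁻¹ * H).trace = Θhat⁻¹ i i := by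
      rw [hHdef, trace_mul_basis]
    rw [htr] at key
    constructor
    · intro _
      have h1 := key.1 (ne_of_gt hdiag)
      linarith [h1]
    · intro h0
      exact absurd h0 (ne_of_gt hdiag)
  · -- off-diagonal case
    set H : Matrix (Fin p) (Fin p) ℝ := Matrix.single i j 1 + Matrix.single j i 1 with hHdef
    clear_value H
    have hHapp : ∀ k l, H k l = (if i = k ∧ j = l then (1:ℝ) else 0)
        + (if j = k ∧ i = l then (1:ℝ) else 0) := by
      intro k l; rw [hHdef]; rfl
    have hHij : H i j = 1 := by
      rw [hHapp]
      rw [if_pos ⟨rfl, rfl⟩, if_neg (by rintro ⟨h1, h2⟩; exact hij h2)]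
      norm_num
    have hHji : H j i = 1 := by
      rw [hHapp]
      rw [if_neg (by rintro ⟨h1, h2⟩; exact hij h1), if_pos ⟨rfl, rfl⟩]
      norm_num
    have hHz : ∀ k l, ¬(k = i ∧ l = j) → ¬(k = j ∧ l = i) → H k l = 0 := by
      intro k l h1 h2
      rw [hHapp, if_neg (by rintro ⟨e1, e2⟩; exact h1 ⟨e1.symm, e2.symm⟩),
        if_neg (by rintro ⟨e1, e2⟩; exact h2 ⟨e1.symm, e2.symm⟩)]
      norm_num
    have hT : ∀ a b : Fin p, (Matrix.single a b (1:ℝ))ᵀ = Matrix.single b a 1 := by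
      intro a b
      ext k l
      show Matrix.single a b (1:ℝ) l k = _
      simp [Matrix.single, and_comm]
    have hH : H.IsHermitian := by
      show Hᴴ = H
      rw [Matrix.conjTranspose_eq_transpose_of_trivial, hHdef, Matrix.transpose_add, hT, hT,
        add_comm]
    have hHsum : (∑ k, ∑ l, |H k l|) = 2 := by
      rw [sum_pair hij (fun k l => |H k l|) ?_]
      · rw [hHij, hHji]; norm_num
      · intro k l h1 h2
        simp only [hHz k l h1 h2, abs_zero]
    have hHq : ∀ x : Fin p → ℝ, |x ⬝ᵥ H *ᵥ x| ≤ 2 * (x ⬝ᵥ x) := by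
      intro x
      have := quad_abs_le H x
      rwa [hHsum] at this
    have habs : ∀ t : ℝ, (∑ k, ∑ l, |(Θhat + t • H) k l|) - (∑ k, ∑ l, |Θhat k l|)
        = 2 * (|Θhat i j + t| - |Θhat i j|) := by
      intro t
      simp only [← Finset.sum_sub_distrib]
      rw [sum_pair hij (fun k l => |(Θhat + t • H) k l| - |Θhat k l|) ?_]
      · simp only [Matrix.add_apply, Matrix.smul_apply, smul_eq_mul, hHij, hHji,
          hsymm' j i, mul_one]
        ring
      · intro k l h1 h2
        simp [Matrix.add_apply, Matrix.smul_apply, hHz k l h1 h2]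
    have hlin : ∀ t : ℝ, (∑ k, ∑ l, S k l * (Θhat + t • H) k l)
        - (∑ k, ∑ l, S k l * Θhat k l) = (2 * S i j) * t := by
      intro t
      simp only [← Finset.sum_sub_distrib]
      rw [sum_pair hij (fun k l => S k l * (Θhat + t • H) k l - S k l * Θhat k l) ?_]
      · simp only [Matrix.add_apply, Matrix.smul_apply, smul_eq_mul, hHij, hHji,
          hS.apply i j, mul_one]
        ring
      · intro k l h1 h2
        simp [Matrix.add_apply, Matrix.smul_apply, hHz k l h1 h2]
    have key := glasso_key hΘ hmin hH two_pos hHq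
      (κ := 2) (c₂ := 2 * S i j) (a := Θhat i j) (by linarith) habs hlin
    have htr : (Θhat⁻¹ * H).trace = 2 * Θhat⁻¹ i j := by
      rw [hHdef, mul_add, trace_add, trace_mul_basis, trace_mul_basis, hinvsymm j i]
      ring
    rw [htr] at key
    constructor
    · intro ha
      have h1 := key.1 ha
      linarith [h1]
    · intro ha
      obtain ⟨h1, h2⟩ := abs_le.mp (key.2 ha)
      exact abs_le.mpr ⟨by linarith, by linarith⟩
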